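/- Let T be a nonempty finite type, let f, h : T → ℝ, let γ > 0, and let λ ∈ (0,1). Define p_τ(t) = exp(-h(t)/γ) / Σ_{t'} exp(-h(t')/γ), q₁(θ) = exp(-(f(θ)+h(θ))/γ) / Σ_{t'} exp(-(f(t')+h(t'))/γ), q₀(θ) = p_τ(θ), and ℓ_{p_τ} = -γ · log( Σ_t exp(-f(t)/γ) · p_τ(t) ). Then for every θ ∈ T, λ·q₁(θ) / ( λ·q₁(θ) + (1-λ)·q₀(θ) ) = σ( (1/γ)·(ℓ_{p_τ} - f(θ)) + log(λ/(1-λ)) ), where σ(x) = 1/(1 + exp(-x)) is the sigmoid function. -/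

import Mathlib

open Real Finset

/-- The sigmoid function `σ(x) = 1/(1 + exp(-x))`. -/
noncomputable def sigmoid (x : ℝ) : ℝ := 1 / (1 + Real.exp (-x))

/-- Explicit finite-parameter-space form of Theorem 2 of the source inference attack
paper: the Bayes posterior probability that the record belongs to client `k`, given
the observed parameter `θ`, equals `σ((ℓ_{p_τ} - f(θ))/γ + log(λ/(1-λ)))`. -/
theorem source_inference_posterior_eq_sigmoid {T : Type*} [Fintype T] [Nonempty T]
    (f h : T → ℝ) (γ : ℝ) (hγ : 0 < γ) (l : ℝ) (hl0 : 0 < l) (hl1 : l < 1)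
    (pτ q₁ q₀ : T → ℝ) (ℓpτ : ℝ)
    (hpτ : pτ = fun t => exp (-h t / γ) / ∑ t' : T, exp (-h t' / γ))
    (hq₁ : q₁ = fun θ => exp (-(f θ + h θ) / γ) / ∑ t' : T, exp (-(f t' + h t') / γ))
    (hq₀ : q₀ = pτ)
    (hℓpτ : ℓpτ = -γ * log (∑ t : T, exp (-f t / γ) * pτ t)) :
    ∀ θ : T,
      l * q₁ θ / (l * q₁ θ + (1 - l) * q₀ θ) =
        _root_.sigmoid ((1 / γ) * (ℓpτ - f θ) + log (l / (1 - l))) := by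
  intro θ
  set S₀ : ℝ := ∑ t' : T, exp (-h t' / γ) with hS₀
  set S₁ : ℝ := ∑ t' : T, exp (-(f t' + h t') / γ) with hS₁
  have hS₀pos : 0 < S₀ := Finset.sum_pos (fun t _ => exp_pos _) Finset.univ_nonempty
  have hS₁pos : 0 < S₁ := Finset.sum_pos (fun t _ => exp_pos _) Finset.univ_nonempty
  have hl1' : 0 < 1 - l := by linarith
  -- the sum in ℓpτ equals S₁/S₀
  have hsum : (∑ t : T, exp (-f t / γ) * pτ t) = S₁ / S₀ := by
    rw [hpτ]
    simp only
    rw [Finset.sum_div]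
    refine Finset.sum_congr rfl fun t _ => ?_
    have : -f t / γ + -h t / γ = -(f t + h t) / γ := by ring
    rw [mul_div_assoc', ← Real.exp_add, this]
  have hℓ : ℓpτ = -γ * log (S₁ / S₀) := by rw [hℓpτ, hsum]
  have hq₁θ : q₁ θ = exp (-(f θ + h θ) / γ) / S₁ := by rw [hq₁]
  have hq₀θ : q₀ θ = exp (-h θ / γ) / S₀ := by rw [hq₀, hpτ]
  have hq₁pos : 0 < q₁ θ := by rw [hq₁θ]; positivity
  have hq₀pos : 0 < q₀ θ := by rw [hq₀θ]; positivity
  -- key: exp(-x) = (1-l)*q₀θ/(l*q₁θ)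
  have hkey : exp (-((1 / γ) * (ℓpτ - f θ) + log (l / (1 - l))))
      = (1 - l) * q₀ θ / (l * q₁ θ) := by
    have h1 : (1 / γ) * (ℓpτ - f θ) = -log (S₁ / S₀) - f θ / γ := by
      rw [hℓ]; field_simp
    rw [h1]
    have h2 : -(-log (S₁ / S₀) - f θ / γ + log (l / (1 - l)))
        = log (S₁ / S₀) + f θ / γ + log ((1 - l) / l) := by
      rw [Real.log_div hl0.ne' hl1'.ne', Real.log_div hl1'.ne' hl0.ne']; ring
    rw [h2, Real.exp_add, Real.exp_add,
      Real.exp_log (by positivity), Real.exp_log (by positivity)]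
    rw [hq₀θ, hq₁θ]
    have h3 : exp (f θ / γ) * exp ((-h θ + -f θ) / γ) = exp (-h θ / γ) := by
      rw [← Real.exp_add]; congr 1; field_simp; ring
    have h3' : exp (-h θ / γ) = exp (f θ / γ) * exp (-(f θ + h θ) / γ) := by
      rw [← Real.exp_add]; congr 1; ring
    rw [h3']
    have hE : 0 < exp (-(f θ + h θ) / γ) := exp_pos _
    generalize exp (-(f θ + h θ) / γ) = E at hE ⊢
    field_simp
  have hden : 0 < l * q₁ θ + (1 - l) * q₀ θ := by positivity
  rw [_root_.sigmoid, hkey]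
  rw [div_eq_div_iff hden.ne' (by positivity)]
  field_simp
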